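/- Let M ∈ ℝ^{n×n}. Suppose there exist Z-matrices X, Y ∈ ℝ^{n×n} with MX = Y, X𝟙 > 0 and Y𝟙 > 0 (so X and Y are K-matrices). Then M is a P-matrix. -/

import Mathlib

open Matrix

/-- A square real matrix is a P-matrix if all of its principal minors are positive. -/
def IsPMat {n : ℕ} (M : Matrix (Fin n) (Fin n) ℝ) : Prop :=
  ∀ S : Finset (Fin n),
    0 < (M.submatrix (Subtype.val : {i // i ∈ S} → Fin n) Subtype.val).det

/-- A Z-matrix has nonpositive off-diagonal entries. -/
def IsZMat {n : ℕ} (M : Matrix (Fin n) (Fin n) ℝ) : Prop :=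
  ∀ i j, i ≠ j → M i j ≤ 0

/-- A Z-matrix (nonpositive off-diagonal entries) with positive column sums has
nonzero determinant.  (Adaptation of `Matrix.det_ne_zero_of_sum_col_pos` to
nonstrict off-diagonal sign.) -/
lemma zmat_det_ne_zero_of_sum_col_pos {n : ℕ}
    {A : Matrix (Fin n) (Fin n) ℝ} (h1 : ∀ i j, i ≠ j → A i j ≤ 0)
    (h2 : ∀ j, 0 < ∑ i, A i j) : A.det ≠ 0 := by
  cases isEmpty_or_nonempty (Fin n)
  · simp
  · contrapose! h2
    obtain ⟨v, ⟨h_vnz, h_vA⟩⟩ := Matrix.exists_vecMul_eq_zero_iff.mpr h2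
    wlog h_sup : 0 < Finset.sup' Finset.univ Finset.univ_nonempty v
    · refine this h1 inferInstance h2 (-1 • v) ?_ ?_ ?_
      · exact smul_ne_zero (by norm_num) h_vnz
      · rw [Matrix.smul_vecMul, h_vA, smul_zero]
      · obtain ⟨i, hi⟩ := Function.ne_iff.mp h_vnz
        simp_rw [Finset.lt_sup'_iff, Finset.mem_univ, true_and] at h_sup ⊢
        simp_rw [not_exists, not_lt] at h_sup
        refine ⟨i, ?_⟩
        rw [Pi.smul_apply, neg_smul, one_smul, Left.neg_pos_iff]
        exact Ne.lt_of_le hi (h_sup i)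
    · obtain ⟨j₀, -, h_j₀⟩ := Finset.exists_mem_eq_sup' Finset.univ_nonempty v
      refine ⟨j₀, ?_⟩
      rw [← mul_le_mul_iff_right₀ (h_j₀ ▸ h_sup), Finset.mul_sum, mul_zero]
      rw [show 0 = ∑ i, v i * A i j₀ from (congrFun h_vA j₀).symm]
      refine Finset.sum_le_sum (fun i hi => ?_)
      by_cases h : i = j₀
      · rw [h]
      · exact mul_le_mul_of_nonpos_right (h_j₀ ▸ Finset.le_sup' v hi) (h1 i j₀ h)

/-- A Z-matrix with positive row sums has nonzero determinant. -/
lemma zmat_det_ne_zero_of_sum_row_pos {n : ℕ}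
    {A : Matrix (Fin n) (Fin n) ℝ} (h1 : ∀ i j, i ≠ j → A i j ≤ 0)
    (h2 : ∀ i, 0 < ∑ j, A i j) : A.det ≠ 0 := by
  rw [← Matrix.det_transpose]
  refine zmat_det_ne_zero_of_sum_col_pos ?_ ?_
  · exact fun i j h => h1 j i h.symm
  · simpa [Matrix.transpose_apply] using h2

/-- A Z-matrix with positive row sums has positive determinant. -/
lemma zmat_det_pos_of_sum_row_pos {n : ℕ}
    {A : Matrix (Fin n) (Fin n) ℝ} (h1 : ∀ i j, i ≠ j → A i j ≤ 0)
    (h2 : ∀ i, 0 < ∑ j, A i j) : 0 < A.det := by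
  -- homotopy from the identity to A
  set f : ℝ → ℝ := fun t => ((1 - t) • (1 : Matrix (Fin n) (Fin n) ℝ) + t • A).det with hf
  have hcont : Continuous f := by
    apply Continuous.matrix_det
    apply Continuous.add
    · exact (continuous_const.sub continuous_id).smul continuous_const
    · exact continuous_id.smul continuous_const
  have hne : ∀ t ∈ Set.Icc (0 : ℝ) 1, f t ≠ 0 := by
    intro t ht
    refine zmat_det_ne_zero_of_sum_row_pos ?_ ?_
    · intro i j hij
      simp only [Matrix.add_apply, Matrix.smul_apply, Matrix.one_apply_ne hij, smul_eq_mul,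
        mul_zero, zero_add]
      exact mul_nonpos_of_nonneg_of_nonpos ht.1 (h1 i j hij)
    · intro i
      have : ∑ j, ((1 - t) • (1 : Matrix (Fin n) (Fin n) ℝ) + t • A) i j
          = (1 - t) * 1 + t * ∑ j, A i j := by
        simp [Finset.sum_add_distrib, Finset.mul_sum, Matrix.one_apply, smul_eq_mul]
      rw [this]
      rcases eq_or_lt_of_le ht.1 with h0 | h0
      · simp [← h0]
      · have h1t : 0 ≤ 1 - t := by linarith [ht.2]
        nlinarith [h2 i, mul_pos h0 (h2 i)]
  have hf0 : f 0 = 1 := by simp [hf]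
  have hf1 : f 1 = A.det := by simp [hf]
  by_contra hle
  push_neg at hle
  have hlt : f 1 < 0 := lt_of_le_of_ne (hf1 ▸ hle) (fun h => hne 1 (by norm_num) (hf1 ▸ h))
  have := intermediate_value_Icc' (by norm_num : (0:ℝ) ≤ 1) (hcont.continuousOn)
  have h0mem : (0 : ℝ) ∈ Set.Icc (f 1) (f 0) := by
    constructor <;> [exact le_of_lt hlt; simp [hf0]]
  obtain ⟨t, ht, hft⟩ := this h0mem
  exact hne t ht hft

theorem proper_hiddenK_witness_isP {n : ℕ}
    (M X Y : Matrix (Fin n) (Fin n) ℝ)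
    (hX : IsZMat X) (hY : IsZMat Y) (hMX : M * X = Y)
    (hXrow : ∀ i, 0 < X.mulVec (fun _ => 1) i)
    (hYrow : ∀ i, 0 < Y.mulVec (fun _ => 1) i) :
    IsPMat M := by
  intro S
  -- Row sums
  have hXs : ∀ i, 0 < ∑ j, X i j := by
    intro i; simpa [Matrix.mulVec, dotProduct] using hXrow i
  have hYs : ∀ i, 0 < ∑ j, Y i j := by
    intro i; simpa [Matrix.mulVec, dotProduct] using hYrow i
  -- X has positive determinant
  have hXdet : 0 < X.det := zmat_det_pos_of_sum_row_pos hX hXs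
  -- The mixed matrix C: rows of Y on S, rows of X off S
  set C : Matrix (Fin n) (Fin n) ℝ := fun i j => if i ∈ S then Y i j else X i j with hC
  have hCZ : ∀ i j, i ≠ j → C i j ≤ 0 := by
    intro i j hij
    by_cases h : i ∈ S <;> simp only [hC, h, if_true, if_false]
    · exact hY i j hij
    · exact hX i j hij
  have hCs : ∀ i, 0 < ∑ j, C i j := by
    intro i
    by_cases h : i ∈ S <;> simp only [hC, h, if_true, if_false]
    · exact hYs i
    · exact hXs i
  have hCdet : 0 < C.det := zmat_det_pos_of_sum_row_pos hCZ hCs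
  -- The matrix N: rows of M on S, identity rows off S
  set N : Matrix (Fin n) (Fin n) ℝ := fun i j => if i ∈ S then M i j else (1 : Matrix (Fin n) (Fin n) ℝ) i j with hN
  have hNX : N * X = C := by
    ext i j
    by_cases h : i ∈ S
    · have : (N * X) i j = (M * X) i j := by
        simp only [Matrix.mul_apply]; simp only [hN, h, if_true]
      rw [this, hMX]; simp [hC, h]
    · have : (N * X) i j = ((1 : Matrix (Fin n) (Fin n) ℝ) * X) i j := by
        simp only [Matrix.mul_apply]; simp only [hN, h, if_false]
      rw [this, Matrix.one_mul]; simp [hC, h]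
  -- det N is the principal minor of M on S
  have hNdet : N.det =
      (M.submatrix (Subtype.val : {i // i ∈ S} → Fin n) Subtype.val).det := by
    rw [Matrix.twoBlockTriangular_det N (fun i => i ∈ S)
      (by intro i hi j hj
          have hij : i ≠ j := fun h => hi (h ▸ hj)
          simp [hN, hi, Matrix.one_apply, hij])]
    have h1 : (Matrix.toSquareBlockProp N (fun i => i ∈ S)) =
        M.submatrix (Subtype.val : {i // i ∈ S} → Fin n) Subtype.val := by
      ext i j
      simp only [Matrix.toSquareBlockProp, Matrix.toBlock, Matrix.submatrix_apply, Matrix.of_apply]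
      simp [hN, i.2]
    have h2 : (Matrix.toSquareBlockProp N (fun i => ¬ i ∈ S)) = 1 := by
      ext i j
      simp only [Matrix.toSquareBlockProp, Matrix.toBlock, Matrix.submatrix_apply, Matrix.of_apply]
      simp [hN, i.2, Matrix.one_apply,
        Subtype.ext_iff]
    rw [h1, h2, Matrix.det_one, mul_one]
    congr!
  -- conclude: det N * det X = det C
  have hdet : N.det * X.det = C.det := by
    rw [← Matrix.det_mul, hNX]
  rw [← hNdet]
  nlinarith [hCdet, hXdet, hdet]
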